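/- Let C be a bivariate copula and F₁, F₂ cumulative distribution functions on ℝ. Then H(x,y) = C(F₁(x), F₂(y)) is a bivariate cumulative distribution function with margins F₁ and F₂; in particular, lim_{y→∞} H(x,y) = F₁(x), lim_{x→∞} H(x,y) = F₂(y), and H is 2-increasing. -/
import Mathlib


open Set Filter

/-- Converse direction of Sklar's theorem: if `C` is a bivariate copula and
`F₁, F₂` are CDFs, then `H(x,y) = C (F₁ x) (F₂ y)` is a bivariate distribution
function with margins `F₁` and `F₂`: its limit in `y` is `F₁ x`, its limit in
`x` is `F₂ y`, and it is 2-increasing. -/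
theorem sklar_converse (C : ℝ → ℝ → ℝ)
    (hmarg₁ : ∀ u ∈ Icc (0 : ℝ) 1, C u 1 = u)
    (hmarg₂ : ∀ v ∈ Icc (0 : ℝ) 1, C 1 v = v)
    (hground₁ : ∀ u ∈ Icc (0 : ℝ) 1, C u 0 = 0)
    (hground₂ : ∀ v ∈ Icc (0 : ℝ) 1, C 0 v = 0)
    (hincr : ∀ a₁ ∈ Icc (0 : ℝ) 1, ∀ b₁ ∈ Icc (0 : ℝ) 1, ∀ a₂ ∈ Icc (0 : ℝ) 1,
      ∀ b₂ ∈ Icc (0 : ℝ) 1, a₁ ≤ b₁ → a₂ ≤ b₂ →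
        0 ≤ C b₁ b₂ - C a₁ b₂ - C b₁ a₂ + C a₁ a₂)
    (F₁ F₂ : ℝ → ℝ)
    (hF₁mono : Monotone F₁) (hF₂mono : Monotone F₂)
    (hF₁range : ∀ x, F₁ x ∈ Icc (0 : ℝ) 1) (hF₂range : ∀ y, F₂ y ∈ Icc (0 : ℝ) 1)
    (hF₁rc : ∀ x, ContinuousWithinAt F₁ (Ici x) x)
    (hF₂rc : ∀ y, ContinuousWithinAt F₂ (Ici y) y)
    (hF₁top : Tendsto F₁ atTop (nhds 1)) (hF₁bot : Tendsto F₁ atBot (nhds 0))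
    (hF₂top : Tendsto F₂ atTop (nhds 1)) (hF₂bot : Tendsto F₂ atBot (nhds 0)) :
    (∀ x, Tendsto (fun y => C (F₁ x) (F₂ y)) atTop (nhds (F₁ x))) ∧
    (∀ y, Tendsto (fun x => C (F₁ x) (F₂ y)) atTop (nhds (F₂ y))) ∧
    (∀ x₁ x₂ y₁ y₂ : ℝ, x₁ ≤ x₂ → y₁ ≤ y₂ →
      0 ≤ C (F₁ x₂) (F₂ y₂) - C (F₁ x₁) (F₂ y₂) - C (F₁ x₂) (F₂ y₁)
          + C (F₁ x₁) (F₂ y₁)) := by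
  have h01 : (0 : ℝ) ∈ Icc (0 : ℝ) 1 := by constructor <;> norm_num
  have h11 : (1 : ℝ) ∈ Icc (0 : ℝ) 1 := by constructor <;> norm_num
  -- Lipschitz-type bounds in the second variable
  have key₂ : ∀ u ∈ Icc (0 : ℝ) 1, ∀ a ∈ Icc (0 : ℝ) 1, ∀ b ∈ Icc (0 : ℝ) 1, a ≤ b →
      C u b - C u a ∈ Icc (0 : ℝ) (b - a) := by
    intro u hu a ha b hb hab
    constructor
    · have := hincr 0 h01 u hu a ha b hb hu.1 hab
      rw [hground₂ a ha, hground₂ b hb] at this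
      linarith
    · have := hincr u hu 1 h11 a ha b hb hu.2 hab
      rw [hmarg₂ a ha, hmarg₂ b hb] at this
      linarith
  have key₁ : ∀ v ∈ Icc (0 : ℝ) 1, ∀ a ∈ Icc (0 : ℝ) 1, ∀ b ∈ Icc (0 : ℝ) 1, a ≤ b →
      C b v - C a v ∈ Icc (0 : ℝ) (b - a) := by
    intro v hv a ha b hb hab
    constructor
    · have := hincr a ha b hb 0 h01 v hv hab hv.1
      rw [hground₁ a ha, hground₁ b hb] at this
      linarith
    · have := hincr a ha b hb v hv 1 h11 hab hv.2
      rw [hmarg₁ a ha, hmarg₁ b hb] at this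
      linarith
  refine ⟨?_, ?_, ?_⟩
  · intro x
    have hu := hF₁range x
    have hlow : ∀ y, F₁ x - (1 - F₂ y) ≤ C (F₁ x) (F₂ y) := by
      intro y
      have := (key₂ (F₁ x) hu (F₂ y) (hF₂range y) 1 h11 (hF₂range y).2).2
      rw [hmarg₁ (F₁ x) hu] at this
      linarith
    have hhigh : ∀ y, C (F₁ x) (F₂ y) ≤ F₁ x := by
      intro y
      have := (key₂ (F₁ x) hu (F₂ y) (hF₂range y) 1 h11 (hF₂range y).2).1
      rw [hmarg₁ (F₁ x) hu] at this
      linarith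
    have hL : Tendsto (fun y => F₁ x - (1 - F₂ y)) atTop (nhds (F₁ x)) := by
      have : Tendsto (fun y => F₁ x - (1 - F₂ y)) atTop (nhds (F₁ x - (1 - 1))) :=
        (tendsto_const_nhds.sub (tendsto_const_nhds.sub hF₂top))
      simpa using this
    exact tendsto_of_tendsto_of_tendsto_of_le_of_le hL tendsto_const_nhds
      (fun y => hlow y) (fun y => hhigh y)
  · intro y
    have hv := hF₂range y
    have hlow : ∀ x, F₂ y - (1 - F₁ x) ≤ C (F₁ x) (F₂ y) := by
      intro x
      have := (key₁ (F₂ y) hv (F₁ x) (hF₁range x) 1 h11 (hF₁range x).2).2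
      rw [hmarg₂ (F₂ y) hv] at this
      linarith
    have hhigh : ∀ x, C (F₁ x) (F₂ y) ≤ F₂ y := by
      intro x
      have := (key₁ (F₂ y) hv (F₁ x) (hF₁range x) 1 h11 (hF₁range x).2).1
      rw [hmarg₂ (F₂ y) hv] at this
      linarith
    have hL : Tendsto (fun x => F₂ y - (1 - F₁ x)) atTop (nhds (F₂ y)) := by
      have : Tendsto (fun x => F₂ y - (1 - F₁ x)) atTop (nhds (F₂ y - (1 - 1))) :=
        (tendsto_const_nhds.sub (tendsto_const_nhds.sub hF₁top))
      simpa using this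
    exact tendsto_of_tendsto_of_tendsto_of_le_of_le hL tendsto_const_nhds
      (fun x => hlow x) (fun x => hhigh x)
  · intro x₁ x₂ y₁ y₂ hx hy
    exact hincr (F₁ x₁) (hF₁range x₁) (F₁ x₂) (hF₁range x₂) (F₂ y₁) (hF₂range y₁)
      (F₂ y₂) (hF₂range y₂) (hF₁mono hx) (hF₂mono hy)
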